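/- arXiv:2112.03655 — 2 statements merged into one kernel-verified Lean document; each statement's English description precedes it below -/
import Mathlib

section
/- Let T be a finite tree with a vertex v, and let i, j be vertices of T with i ≠ v and j ≠ v. Then the (i,j) entry of Q_{T,v} equals min{ dist_T(v,w) : w lies on the unique path in T from i to j }. In particular, the (i,i) entry of Q_{T,v} equals dist_T(i,v). -/
open SimpleGraph Filter

namespace Braess

universe u

variable {V : Type*}

/-- The number of spanning trees of `G`. -/
noncomputable def tau (G : SimpleGraph V) : ℕ :=
  Nat.card {H : SimpleGraph V // H ≤ G ∧ H.IsTree}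

/-- `H` is a 2-forest (spanning forest with exactly two components) of `G`. -/
def IsTwoForest (G H : SimpleGraph V) : Prop :=
  H ≤ G ∧ H.IsAcyclic ∧ Nat.card H.ConnectedComponent = 2

/-- `f_G(i,j)`: the number of 2-forests of `G` with `i` and `j` in different components. -/
noncomputable def fsep (G : SimpleGraph V) (i j : V) : ℕ :=
  Nat.card {H : SimpleGraph V // IsTwoForest G H ∧ ¬ H.Reachable i j}

/-- `q_{i,j}`: the number of 2-forests of `G` with `i` and `j` in one component and `v`
in the other. -/
noncomputable def qEntry (G : SimpleGraph V) (v i j : V) : ℕ :=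
  Nat.card {H : SimpleGraph V // IsTwoForest G H ∧ H.Reachable i j ∧ ¬ H.Reachable i v}

/-- Degree of a vertex. -/
noncomputable def deg (G : SimpleGraph V) (i : V) : ℕ :=
  Nat.card (G.neighborSet i)

/-- Number of edges of `G`. -/
noncomputable def edgeCount (G : SimpleGraph V) : ℕ :=
  Nat.card G.edgeSet

/-- `d_G^T F_G d_G`. -/
noncomputable def dFd (G : SimpleGraph V) : ℚ :=
  ∑ᶠ i, ∑ᶠ j, (deg G i : ℚ) * (fsep G i j : ℚ) * (deg G j : ℚ)

/-- `d_G^T f^v_G`. -/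
noncomputable def dfv (G : SimpleGraph V) (v : V) : ℚ :=
  ∑ᶠ i, (deg G i : ℚ) * (fsep G i v : ℚ)

/-- `d_G^T Q_{G,v} d_G`. -/
noncomputable def dQd (G : SimpleGraph V) (v : V) : ℚ :=
  ∑ᶠ i, ∑ᶠ j, (deg G i : ℚ) * (qEntry G v i j : ℚ) * (deg G j : ℚ)

/-- `φ_G(v) = d_G^T (2 f^v_G 𝟙^T − F_G) d_G`. -/
noncomputable def phi (G : SimpleGraph V) (v : V) : ℚ :=
  ∑ᶠ i, ∑ᶠ j, (deg G i : ℚ) * (2 * (fsep G i v : ℚ) - (fsep G i j : ℚ)) * (deg G j : ℚ)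

/-- Kemeny's constant, via the combinatorial formula. -/
noncomputable def kemeny (G : SimpleGraph V) : ℚ :=
  dFd G / (4 * (edgeCount G : ℚ) * (tau G : ℚ))

/-- Eccentricity of a vertex. -/
noncomputable def ecc (G : SimpleGraph V) (v : V) : ℕ :=
  sSup (Set.range (G.dist v))

/-- The graph `G̃(v,k₁,k₂)`, obtained from `G` by attaching at `v` two pendent paths
with `k₁` and `k₂` new vertices respectively. -/
def attach (G : SimpleGraph V) (v : V) (k₁ k₂ : ℕ) :
    SimpleGraph (V ⊕ (Fin k₁ ⊕ Fin k₂)) where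
  Adj x y :=
    match x, y with
    | .inl a, .inl b => G.Adj a b
    | .inl a, .inr (.inl i) => a = v ∧ (i : ℕ) = 0
    | .inl a, .inr (.inr i) => a = v ∧ (i : ℕ) = 0
    | .inr (.inl i), .inl b => b = v ∧ (i : ℕ) = 0
    | .inr (.inr i), .inl b => b = v ∧ (i : ℕ) = 0
    | .inr (.inl i), .inr (.inl j) => (i : ℕ) + 1 = (j : ℕ) ∨ (j : ℕ) + 1 = (i : ℕ)
    | .inr (.inr i), .inr (.inr j) => (i : ℕ) + 1 = (j : ℕ) ∨ (j : ℕ) + 1 = (i : ℕ)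
    | .inr (.inl _), .inr (.inr _) => False
    | .inr (.inr _), .inr (.inl _) => False
  symm := by
    constructor
    rintro (a | (i | i)) (b | (j | j)) h
    · exact G.symm.symm _ _ h
    · exact h
    · exact h
    · exact h
    · exact h.symm
    · exact h.elim
    · exact h
    · exact h.elim
    · exact h.symm
  loopless := by
    constructor
    rintro (a | (i | i)) h
    · exact G.loopless.irrefl a h
    · omega
    · omega

/-- The far endpoint of the first attached path (it is `v` itself when `k₁ = 0`). -/
def farEnd₁ (v : V) (k₁ k₂ : ℕ) : V ⊕ (Fin k₁ ⊕ Fin k₂) :=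
  if h : 0 < k₁ then .inr (.inl ⟨k₁ - 1, by omega⟩) else .inl v

/-- The far endpoint of the second attached path (it is `v` itself when `k₂ = 0`). -/
def farEnd₂ (v : V) (k₁ k₂ : ℕ) : V ⊕ (Fin k₁ ⊕ Fin k₂) :=
  if h : 0 < k₂ then .inr (.inr ⟨k₂ - 1, by omega⟩) else .inl v

/-- The graph `Ĝ(v,k₁,k₂)`: `G̃(v,k₁,k₂)` together with the extra edge joining the far
endpoints of the two attached paths. -/
def attachEdge (G : SimpleGraph V) (v : V) (k₁ k₂ : ℕ) :
    SimpleGraph (V ⊕ (Fin k₁ ⊕ Fin k₂)) :=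
  attach G v k₁ k₂ ⊔ fromEdgeSet {s(farEnd₁ v k₁ k₂, farEnd₂ v k₁ k₂)}

/-- `G` is `(v,k₁,k₂)`-paradoxical. -/
def IsParadoxical (G : SimpleGraph V) (v : V) (k₁ k₂ : ℕ) : Prop :=
  kemeny (attach G v k₁ k₂) < kemeny (attachEdge G v k₁ k₂)

/-- `φ₁(k₁,k₂)`. -/
noncomputable def kphi₁ (k₁ k₂ : ℕ) : ℚ :=
  -(2 / 3) * ((k₁ : ℚ) + k₂) * ((k₁ : ℚ) + k₂ - 1) + 2 * k₁ * k₂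

/-- `φ₂(k₁,k₂)`. -/
noncomputable def kphi₂ (k₁ k₂ : ℕ) : ℚ :=
  -((k₁ : ℚ) + k₂) * (5 * ((k₁ : ℚ) + k₂) ^ 2 - ((k₁ : ℚ) + k₂) - 1)
    + 12 * k₁ * k₂ * ((k₁ : ℚ) + k₂ + 1)

/-- `φ₃(k₁,k₂)`. -/
noncomputable def kphi₃ (k₁ k₂ : ℕ) : ℚ :=
  -((k₁ : ℚ) + k₂ + 1) * ((k₁ : ℚ) + k₂) * ((k₁ : ℚ) + k₂ - 1) ^ 2

/-- `Φ_G(v,k₁,k₂)`, with `k = k₁ + k₂ + 1`. -/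
noncomputable def Phi (G : SimpleGraph V) (v : V) (k₁ k₂ : ℕ) : ℚ :=
  ((k₁ : ℚ) + k₂ + 1) * phi G v
    + 4 * (edgeCount G : ℚ) ^ 2 * (tau G : ℚ) * ((k₁ : ℚ) + k₂ + 1) * kphi₁ k₁ k₂
    + (2 * (edgeCount G : ℚ) * (tau G : ℚ) * ((k₁ : ℚ) + k₂ + 1) / 3) * kphi₂ k₁ k₂
    + (2 * (tau G : ℚ) * ((k₁ : ℚ) + k₂ + 1) / 3) * kphi₃ k₁ k₂

/-- A sequence of graphs with specified vertices is asymptotically paradoxical. -/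
def AsympParadoxical {W : ℕ → Type u} (G : ∀ n, SimpleGraph (W n)) (v : ∀ n, W n) : Prop :=
  ∀ l₁ l₂ : ℕ, 2 ≤ l₁ + l₂ → ∃ N, ∀ n ≥ N, IsParadoxical (G n) (v n) l₁ l₂

section Glue

variable {V₁ V₂ : Type*}

/-- The graph obtained from `H₁` and `H₂` by identifying `v₁ ∈ V(H₁)` and `v₂ ∈ V(H₂)` as a
single vertex (represented by `Sum.inl v₁`). -/
def glue (H₁ : SimpleGraph V₁) (H₂ : SimpleGraph V₂) (v₁ : V₁) (v₂ : V₂) :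
    SimpleGraph (V₁ ⊕ {x : V₂ // x ≠ v₂}) where
  Adj x y :=
    match x, y with
    | .inl a, .inl b => H₁.Adj a b
    | .inl a, .inr b => a = v₁ ∧ H₂.Adj v₂ b.1
    | .inr a, .inl b => b = v₁ ∧ H₂.Adj v₂ a.1
    | .inr a, .inr b => H₂.Adj a.1 b.1
  symm := by
    constructor
    rintro (a | a) (b | b) h
    · exact H₁.symm.symm _ _ h
    · exact h
    · exact h
    · exact H₂.symm.symm _ _ h
  loopless := by
    constructor
    rintro (a | a) h
    · exact H₁.loopless.irrefl a h
    · exact H₂.loopless.irrefl a.1 h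

/-- The canonical map from `V₂` to the vertex set of the glued graph. -/
def glueRight [DecidableEq V₂] (v₁ : V₁) (v₂ : V₂) (x : V₂) : V₁ ⊕ {y : V₂ // y ≠ v₂} :=
  if h : x = v₂ then .inl v₁ else .inr ⟨x, h⟩

end Glue

section MultiGlue

variable {ι : Type*} {W : ι → Type*} {V₀ : Type*}

/-- The graph obtained from the family `H i` and `G` by identifying all the vertices `w i`
and `v` as a single vertex (represented by `Sum.inl v`). -/
def multiGlue (H : ∀ i, SimpleGraph (W i)) (w : ∀ i, W i)
    (G : SimpleGraph V₀) (v : V₀) :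
    SimpleGraph (V₀ ⊕ Σ i, {x : W i // x ≠ w i}) where
  Adj x y :=
    match x, y with
    | .inl a, .inl b => G.Adj a b
    | .inl a, .inr ⟨i, b⟩ => a = v ∧ (H i).Adj (w i) b.1
    | .inr ⟨i, a⟩, .inl b => b = v ∧ (H i).Adj (w i) a.1
    | .inr ⟨i, a⟩, .inr ⟨j, b⟩ => ∃ h : i = j, (H j).Adj (h ▸ a).1 b.1
  symm := by
    constructor
    rintro (a | ⟨i, a⟩) (b | ⟨j, b⟩) h
    · exact G.symm.symm _ _ h
    · exact h
    · exact h
    · obtain ⟨rfl, h⟩ := h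
      exact ⟨rfl, (H i).symm.symm _ _ h⟩
  loopless := by
    constructor
    rintro (a | ⟨i, a⟩) h
    · exact G.loopless.irrefl a h
    · obtain ⟨h', h⟩ := h
      exact (H i).loopless.irrefl a.1 h

end MultiGlue

/-- The broom `𝓑_{n,k}`: a path on the `k` vertices `0, 1, …, k−1` together with `n − k`
pendent vertices (the vertices `k, …, n−1`) all adjacent to the vertex `0`. -/
def broomGraph (n k : ℕ) : SimpleGraph (Fin n) where
  Adj i j :=
    ((i : ℕ) + 1 = (j : ℕ) ∧ (j : ℕ) < k) ∨ ((j : ℕ) + 1 = (i : ℕ) ∧ (i : ℕ) < k) ∨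
      ((i : ℕ) = 0 ∧ k ≤ (j : ℕ) ∧ i ≠ j) ∨ ((j : ℕ) = 0 ∧ k ≤ (i : ℕ) ∧ i ≠ j)
  symm := by
    constructor
    intro i j h
    tauto
  loopless := by
    constructor
    rintro i (⟨h, -⟩ | ⟨h, -⟩ | ⟨-, -, h⟩ | ⟨-, -, h⟩)
    · omega
    · omega
    · exact h rfl
    · exact h rfl

section Branch

variable (G : SimpleGraph V) (v : V)

/-- The vertex set of the branch of `G` at `v` corresponding to the connected component `c`
of `G − v`. -/
def branchSet (c : (G.induce {x : V | x ≠ v}).ConnectedComponent) : Set V :=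
  insert v {x : V | ∃ h : x ≠ v,
    (G.induce {x : V | x ≠ v}).connectedComponentMk ⟨x, h⟩ = c}

/-- The vertex set of the complementary part `G'_c`: everything outside the branch at `c`,
together with `v`. -/
def cobranchSet (c : (G.induce {x : V | x ≠ v}).ConnectedComponent) : Set V :=
  insert v {x : V | ∃ h : x ≠ v,
    (G.induce {x : V | x ≠ v}).connectedComponentMk ⟨x, h⟩ ≠ c}

end Branch

section Sequence

/-- `Tnew` is obtained from `Told` by adding one new pendent vertex (the last vertex). -/
def AddPendentStep {n : ℕ} (Told : SimpleGraph (Fin (n + 1)))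
    (Tnew : SimpleGraph (Fin (n + 2))) : Prop :=
  (∀ a b : Fin (n + 1), Tnew.Adj a.castSucc b.castSucc ↔ Told.Adj a b) ∧
    ∃ u : Fin (n + 1), ∀ x : Fin (n + 1), Tnew.Adj (Fin.last (n + 1)) x.castSucc ↔ x = u

/-- `Tnew` is obtained from `Told` by subdividing one edge, the new (last) vertex being
placed in the middle of it. -/
def SubdivideStep {n : ℕ} (Told : SimpleGraph (Fin (n + 1)))
    (Tnew : SimpleGraph (Fin (n + 2))) : Prop :=
  ∃ a b : Fin (n + 1), Told.Adj a b ∧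
    (∀ x y : Fin (n + 1), Tnew.Adj x.castSucc y.castSucc ↔ (Told.Adj x y ∧ s(x, y) ≠ s(a, b))) ∧
    (∀ x : Fin (n + 1), Tnew.Adj (Fin.last (n + 1)) x.castSucc ↔ (x = a ∨ x = b))

/-- The vertex set of the branch of `T` at the vertex `0` containing the vertex `w`. -/
def branchSetAt {m : ℕ} (T : SimpleGraph (Fin (m + 1))) (w : Fin (m + 1)) :
    Set (Fin (m + 1)) :=
  insert 0 {y : Fin (m + 1) | ∃ (hy : y ≠ 0) (hw : w ≠ 0),
    (T.induce {z : Fin (m + 1) | z ≠ 0}).Reachable ⟨y, hy⟩ ⟨w, hw⟩}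

/-- The eccentricity of the vertex `0` in the branch of `T` at `0` containing `w`. -/
noncomputable def branchEcc {m : ℕ} (T : SimpleGraph (Fin (m + 1))) (w : Fin (m + 1)) : ℕ :=
  ecc (T.induce (branchSetAt T w)) ⟨0, Set.mem_insert _ _⟩

/-- `f = Θ(g)` (big Theta) for `ℕ`-valued sequences. -/
def IsBigTheta (f g : ℕ → ℕ) : Prop :=
  ∃ c₁ c₂ : ℚ, 0 < c₁ ∧ 0 < c₂ ∧
    ∃ N, ∀ n ≥ N, c₁ * (g n : ℚ) ≤ (f n : ℚ) ∧ (f n : ℚ) ≤ c₂ * (g n : ℚ)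

/-- `β_n`: the number of branches of `T n` at the vertex `0` whose eccentricity function (in
later members of the sequence, under the consistent indexing that tracks each branch by the
vertices it contains) is `Θ` of the eccentricity of `0`. -/
noncomputable def beta (T : ∀ n : ℕ, SimpleGraph (Fin (n + 1))) (n : ℕ) : ℕ :=
  Nat.card {c : ((T n).induce {z : Fin (n + 1) | z ≠ 0}).ConnectedComponent //
    ∃ (x : Fin (n + 1)) (hx : x ≠ 0),
      ((T n).induce {z : Fin (n + 1) | z ≠ 0}).connectedComponentMk ⟨x, hx⟩ = c ∧
      IsBigTheta
        (fun m => if h : n ≤ m then branchEcc (T m) (Fin.castLE (by omega) x) else 0)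
        (fun m => ecc (T m) 0)}

end Sequence



section Stmt11Aux

open SimpleGraph Walk

variable {T : SimpleGraph V}


/-- In an acyclic graph, reachability after deleting one edge is equivalent to that edge
not lying on (any, hence the unique) path. -/
lemma reach_del_iff (hT : T.IsAcyclic) {x y : V} (p : T.Walk x y) (hp : p.IsPath)
    (e : Sym2 V) : (T.deleteEdges {e}).Reachable x y ↔ e ∉ p.edges := by
  classical
  constructor
  · rintro ⟨q⟩ hmem
    have hq : ∀ e' ∈ q.edges, e' ∈ T.edgeSet := fun e' he' =>
      ((T.edgeSet_deleteEdges {e} ▸ q.edges_subset_edgeSet he') : e' ∈ T.edgeSet \ {e}).1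
    have hpe : p = (q.transfer T hq).bypass := by
      have := hT.path_unique ⟨p, hp⟩ ⟨(q.transfer T hq).bypass, (q.transfer T hq).bypass_isPath⟩
      exact congrArg Subtype.val this
    have h1 : e ∈ (q.transfer T hq).edges :=
      (q.transfer T hq).edges_bypass_subset (hpe ▸ hmem)
    rw [edges_transfer] at h1
    have h2 := q.edges_subset_edgeSet h1
    rw [edgeSet_deleteEdges] at h2
    exact h2.2 rfl
  · intro hmem
    exact ⟨p.toDeleteEdges {e} (by rintro e' he' rfl; exact hmem he')⟩

lemma first_hit {P : V → Prop} :
    ∀ {x y : V} (p : T.Walk x y), p.IsPath → P y →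
      ∃ w, P w ∧ ∃ q : T.Walk x w, q.IsPath ∧ q.support ⊆ p.support ∧
        q.edges ⊆ p.edges ∧ ∀ z ∈ q.support, z ≠ w → ¬ P z := by
  intro x y p
  induction p with
  | nil =>
    intro _ hy
    refine ⟨_, hy, Walk.nil, IsPath.nil, fun a ha => ha, fun a ha => ha, ?_⟩
    intro z hz hzx
    simp only [Walk.support_nil, List.mem_singleton] at hz
    exact absurd hz hzx
  | @cons u u' y h p' ih =>
    intro hp hy
    rw [Walk.cons_isPath_iff] at hp
    by_cases hPu : P u
    · refine ⟨u, hPu, Walk.nil, IsPath.nil, ?_, ?_, ?_⟩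
      · intro a ha
        simp only [Walk.support_nil, List.mem_singleton] at ha
        subst ha
        exact Walk.start_mem_support _
      · intro a ha
        simp only [Walk.edges_nil] at ha
        exact absurd ha List.not_mem_nil
      · intro z hz hzx
        simp only [Walk.support_nil, List.mem_singleton] at hz
        exact absurd hz hzx
    · obtain ⟨w, hw, q, hq, hsupp, hedges, hlast⟩ := ih hp.1 hy
      refine ⟨w, hw, Walk.cons h q, ?_, ?_, ?_, ?_⟩
      · rw [Walk.cons_isPath_iff]; exact ⟨hq, fun hu => hp.2 (hsupp hu)⟩
      · rw [Walk.support_cons, Walk.support_cons]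
        exact List.cons_subset_cons u hsupp
      · rw [Walk.edges_cons, Walk.edges_cons]
        exact List.cons_subset_cons _ hedges
      · intro z hz hzw
        rw [Walk.support_cons, List.mem_cons] at hz
        rcases hz with rfl | hz
        · exact hPu
        · exact hlast z hz hzw

lemma card_cc_le [Finite V] {G₁ G₂ : SimpleGraph V} (h : G₁ ≤ G₂) :
    Nat.card G₂.ConnectedComponent ≤ Nat.card G₁.ConnectedComponent := by
  have hfin : Finite G₁.ConnectedComponent :=
    Finite.of_surjective G₁.connectedComponentMk
      (fun c => c.ind (fun v => ⟨v, rfl⟩))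
  refine Nat.card_le_card_of_surjective
    (ConnectedComponent.map (Hom.ofLE h)) ?_
  intro c
  exact c.ind fun v => ⟨G₁.connectedComponentMk v, rfl⟩

lemma not_reach_del_endpoints (hT : T.IsAcyclic) {a b : V} (hab : T.Adj a b) :
    ¬ (T.deleteEdges {s(a, b)}).Reachable a b := by
  have h := (isAcyclic_iff_forall_adj_isBridge.mp hT) hab
  rw [isBridge_iff] at h
  exact h


lemma twoForest_iff [Finite V] (hT : T.IsTree) {H : SimpleGraph V} :
    IsTwoForest T H ↔ ∃ e ∈ T.edgeSet, H = T.deleteEdges {e} := by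
  classical
  constructor
  · rintro ⟨hle, hac, hcard⟩
    -- the set of missing edges
    have hne : ∃ e, e ∈ T.edgeSet ∧ e ∉ H.edgeSet := by
      by_contra hc
      push_neg at hc
      have : T ≤ H := edgeSet_subset_edgeSet.mp hc
      have hTH : H = T := le_antisymm hle this
      subst hTH
      have h1 : Nat.card H.ConnectedComponent = 1 := by
        have := hT.isConnected.preconnected.subsingleton_connectedComponent
        have hne : Nonempty V := hT.isConnected.nonempty
        have : Nonempty H.ConnectedComponent := ⟨H.connectedComponentMk hne.some⟩
        exact Nat.card_unique
      omega
    obtain ⟨e, heT, heH⟩ := hne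
    have hsub : ∀ f, f ∈ T.edgeSet → f ∉ H.edgeSet → f = e := by
      by_contra hc
      push_neg at hc
      obtain ⟨f, hfT, hfH, hfe⟩ := hc
      -- two distinct missing edges give ≥ 3 components
      revert hfT hfH hfe heT heH
      induction e using Sym2.ind with | _ a₁ b₁ => ?_
      induction f using Sym2.ind with | _ a₂ b₂ => ?_
      intro heT heH hfT hfH hfe
      rw [SimpleGraph.mem_edgeSet] at hfT heT
      set G₂ := T.deleteEdges {s(a₁, b₁), s(a₂, b₂)} with hG₂
      have hHG₂ : H ≤ G₂ := by
        rw [← edgeSet_subset_edgeSet, edgeSet_deleteEdges]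
        intro g hg
        refine ⟨edgeSet_mono hle hg, ?_⟩
        rintro (rfl | rfl)
        · exact heH hg
        · exact hfH hg
      have hmono₁ : G₂ ≤ T.deleteEdges {s(a₁, b₁)} := by
        rw [← edgeSet_subset_edgeSet, edgeSet_deleteEdges, edgeSet_deleteEdges]
        rintro g ⟨hg, hg2⟩
        exact ⟨hg, fun h => hg2 (Set.mem_insert_iff.mpr (Or.inl h))⟩
      have hmono₂ : G₂ ≤ T.deleteEdges {s(a₂, b₂)} := by
        rw [← edgeSet_subset_edgeSet, edgeSet_deleteEdges, edgeSet_deleteEdges]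
        rintro g ⟨hg, hg2⟩
        exact ⟨hg, fun h => hg2 (Set.mem_insert_iff.mpr (Or.inr h))⟩
      have nR₁ : ¬ G₂.Reachable a₁ b₁ :=
        fun h => not_reach_del_endpoints hT.IsAcyclic heT (h.mono hmono₁)
      have nR₂ : ¬ G₂.Reachable a₂ b₂ :=
        fun h => not_reach_del_endpoints hT.IsAcyclic hfT (h.mono hmono₂)
      have hadj : (T.deleteEdges {s(a₁, b₁)}).Adj a₂ b₂ := by
        rw [deleteEdges_adj]
        exact ⟨hfT, fun h => hfe h⟩
      have key : ∃ x, (x = a₂ ∨ x = b₂) ∧ ¬ G₂.Reachable x a₁ ∧ ¬ G₂.Reachable x b₁ := by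
        by_contra hc
        push_neg at hc
        have h₂ : G₂.Reachable a₂ a₁ ∨ G₂.Reachable a₂ b₁ :=
          or_iff_not_imp_left.mpr (hc a₂ (Or.inl rfl))
        have h₃ : G₂.Reachable b₂ a₁ ∨ G₂.Reachable b₂ b₁ :=
          or_iff_not_imp_left.mpr (hc b₂ (Or.inr rfl))
        rcases h₂ with ha | ha
        all_goals rcases h₃ with hb | hb
        · exact nR₂ (ha.trans hb.symm)
        · exact not_reach_del_endpoints hT.IsAcyclic heT
            (((ha.mono hmono₁).symm.trans hadj.reachable).trans (hb.mono hmono₁))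
        · exact not_reach_del_endpoints hT.IsAcyclic heT
            (((hb.mono hmono₁).symm.trans hadj.symm.reachable).trans (ha.mono hmono₁))
        · exact nR₂ (ha.trans hb.symm)
      obtain ⟨x, _, hxa, hxb⟩ := key
      have hfin : Finite G₂.ConnectedComponent :=
        Finite.of_surjective G₂.connectedComponentMk (fun c => c.ind (fun v => ⟨v, rfl⟩))
      have h3 : 2 < Nat.card G₂.ConnectedComponent := by
        have := Fintype.ofFinite G₂.ConnectedComponent
        rw [Nat.card_eq_fintype_card, Fintype.two_lt_card_iff]
        refine ⟨G₂.connectedComponentMk a₁, G₂.connectedComponentMk b₁,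
          G₂.connectedComponentMk x, ?_, ?_, ?_⟩
        · simpa using nR₁
        · simpa using fun h => hxa h.symm
        · simpa using fun h => hxb h.symm
      have := card_cc_le hHG₂
      omega
    refine ⟨e, heT, le_antisymm ?_ ?_⟩
    · rw [← edgeSet_subset_edgeSet, edgeSet_deleteEdges]
      intro g hg
      refine ⟨edgeSet_mono hle hg, ?_⟩
      rintro rfl
      exact heH hg
    · rw [← edgeSet_subset_edgeSet, edgeSet_deleteEdges]
      rintro g ⟨hgT, hge⟩
      by_contra hgH
      exact hge (hsub g hgT hgH)
  · rintro ⟨e, heT, rfl⟩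
    refine ⟨T.deleteEdges_le {e}, ?_, ?_⟩
    · intro u c hc
      have hsub : ∀ e' ∈ c.edges, e' ∈ T.edgeSet :=
        fun e' he' => edgeSet_mono (T.deleteEdges_le {e}) (c.edges_subset_edgeSet he')
      exact hT.IsAcyclic _ (hc.transfer hsub)
    · revert heT
      induction e using Sym2.ind with | _ a b => ?_
      intro heT
      rw [SimpleGraph.mem_edgeSet] at heT
      rw [Nat.card_eq_two_iff]
      refine ⟨(T.deleteEdges {s(a, b)}).connectedComponentMk a,
        (T.deleteEdges {s(a, b)}).connectedComponentMk b, ?_, ?_⟩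
      · simpa using not_reach_del_endpoints hT.IsAcyclic heT
      · rw [Set.eq_univ_iff_forall]
        intro c
        refine c.ind fun z => ?_
        obtain ⟨p, hp, -⟩ := hT.existsUnique_path z a
        by_cases he : s(a, b) ∈ p.edges
        · have hb : b ∈ p.support := p.snd_mem_support_of_mem_edges he
          have hq : (p.takeUntil b hb).IsPath := hp.takeUntil hb
          have hqe : s(a, b) ∉ (p.takeUntil b hb).edges := by
            intro hqe
            have ha1 : a ∈ (p.takeUntil b hb).support :=
              (p.takeUntil b hb).fst_mem_support_of_mem_edges hqe
            have hab : a ≠ b := heT.ne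
            have ha2 : a ∈ (p.dropUntil b hb).support.tail := by
              have h' := (p.dropUntil b hb).end_mem_support
              rw [(p.dropUntil b hb).support_eq_cons, List.mem_cons] at h'
              rcases h' with h' | h'
              · exact absurd h' hab
              · exact h'
            have hnd := hp.support_nodup
            rw [← Walk.take_spec p hb, Walk.support_append] at hnd
            exact List.disjoint_of_nodup_append hnd ha1 ha2
          have hrz : (T.deleteEdges {s(a, b)}).Reachable z b :=
            (reach_del_iff hT.IsAcyclic (p.takeUntil b hb) hq s(a, b)).mpr hqe
          exact Or.inr (ConnectedComponent.sound hrz)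
        · have hrz : (T.deleteEdges {s(a, b)}).Reachable z a :=
            (reach_del_iff hT.IsAcyclic p hp s(a, b)).mpr he
          exact Or.inl (ConnectedComponent.sound hrz)



lemma qEntry_tree [Fintype V] (hT : T.IsTree) (v i j : V)
    (p : T.Walk i j) (hp : p.IsPath) :
    qEntry T v i j = sInf {d : ℕ | ∃ w ∈ p.support, T.dist v w = d} := by
  classical
  obtain ⟨piv, hpiv, -⟩ := hT.existsUnique_path i v
  set S : Set (Sym2 V) := {e | e ∈ piv.edges ∧ e ∉ p.edges} with hS
  have hfin : S.Finite := Set.toFinite S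
  -- Step 1: counting
  have step1 : qEntry T v i j = S.ncard := by
    rw [qEntry, ← Nat.card_coe_set_eq]
    refine (Nat.card_congr (Equiv.ofBijective
      (fun e : S => (⟨T.deleteEdges {e.1},
        (twoForest_iff hT).mpr ⟨e.1, piv.edges_subset_edgeSet e.2.1, rfl⟩,
        (reach_del_iff hT.IsAcyclic p hp e.1).mpr e.2.2,
        fun hr => ((reach_del_iff hT.IsAcyclic piv hpiv e.1).mp hr) e.2.1⟩ :
        {H : SimpleGraph V // IsTwoForest T H ∧ H.Reachable i j ∧ ¬ H.Reachable i v}))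
      ⟨?_, ?_⟩)).symm
    · rintro ⟨e, he⟩ ⟨e', he'⟩ heq
      simp only [Subtype.mk_eq_mk] at heq ⊢
      have h2 := congrArg SimpleGraph.edgeSet heq
      rw [edgeSet_deleteEdges, edgeSet_deleteEdges] at h2
      by_contra hne
      have he'T : e' ∈ T.edgeSet := piv.edges_subset_edgeSet he'.1
      have : e' ∈ T.edgeSet \ {e} := ⟨he'T, fun h => hne (Set.mem_singleton_iff.mp h).symm⟩
      rw [h2] at this
      exact this.2 rfl
    · rintro ⟨H, hH2f, hrij, hniv⟩
      obtain ⟨e, heT, rfl⟩ := (twoForest_iff hT).mp hH2f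
      refine ⟨⟨e, ?_, ?_⟩, rfl⟩
      · by_contra hc
        exact hniv ((reach_del_iff hT.IsAcyclic piv hpiv e).mpr hc)
      · exact (reach_del_iff hT.IsAcyclic p hp e).mp hrij
  -- Step 2a: lower bound
  have step2a : ∀ d ∈ {d : ℕ | ∃ w ∈ p.support, T.dist v w = d}, S.ncard ≤ d := by
    rintro d ⟨w, hw, rfl⟩
    obtain ⟨pwv, hpwv, hu⟩ := hT.existsUnique_path w v
    have hsub : S ⊆ {e | e ∈ pwv.edges} := by
      rintro e ⟨he1, he2⟩
      have hRiw : (T.deleteEdges {e}).Reachable i w :=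
        (reach_del_iff hT.IsAcyclic (p.takeUntil w hw) (hp.takeUntil hw) e).mpr
          (fun hc => he2 (p.edges_takeUntil_subset hw hc))
      have hniv : ¬ (T.deleteEdges {e}).Reachable i v :=
        fun hr => (reach_del_iff hT.IsAcyclic piv hpiv e).mp hr he1
      have hnwv : ¬ (T.deleteEdges {e}).Reachable w v := fun hr => hniv (hRiw.trans hr)
      by_contra hc
      exact hnwv ((reach_del_iff hT.IsAcyclic pwv hpwv e).mpr hc)
    have hlen : pwv.length ≤ T.dist w v := by
      obtain ⟨q, hq⟩ := (hT.isConnected.preconnected w v).exists_walk_length_eq_dist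
      have hbp : q.bypass = pwv := hu q.bypass q.bypass_isPath
      calc pwv.length = q.bypass.length := by rw [hbp]
        _ ≤ q.length := q.length_bypass_le 
        _ = T.dist w v := hq
    have h1 : {e | e ∈ pwv.edges}.ncard ≤ pwv.length := by
      have he : {e | e ∈ pwv.edges} = ↑pwv.edges.toFinset := by ext f; simp
      rw [he, Set.ncard_coe_finset]
      calc pwv.edges.toFinset.card ≤ pwv.edges.length := pwv.edges.toFinset_card_le
        _ = pwv.length := pwv.length_edges
    calc S.ncard ≤ {e | e ∈ pwv.edges}.ncard := Set.ncard_le_ncard hsub (Set.toFinite _)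
      _ ≤ pwv.length := h1
      _ ≤ T.dist w v := hlen
      _ = T.dist v w := dist_comm ..
  -- Step 2b: the infimum is attained within S.ncard
  have step2b : ∃ w ∈ p.support, T.dist v w ≤ S.ncard := by
    obtain ⟨w, hwP, q, hq, hqsupp, hqedges, hlast⟩ :=
      first_hit (P := fun z => z ∈ p.support) piv.reverse hpiv.reverse p.start_mem_support
    refine ⟨w, hwP, ?_⟩
    have hqS : ∀ e ∈ q.edges, e ∈ S := by
      intro e
      induction e using Sym2.ind with | _ x y => ?_
      intro he
      have hpivmem : s(x, y) ∈ piv.edges := by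
        have := hqedges he
        rwa [Walk.edges_reverse, List.mem_reverse] at this
      refine ⟨hpivmem, ?_⟩
      have hxy : x ≠ y := (q.adj_of_mem_edges he).ne
      by_cases hxw : x = w
      · have hy : y ∈ q.support := q.snd_mem_support_of_mem_edges he
        have hynp : ¬ y ∈ p.support := hlast y hy (fun h => hxy (hxw.trans h.symm))
        exact fun hc => hynp (p.snd_mem_support_of_mem_edges hc)
      · have hx : x ∈ q.support := q.fst_mem_support_of_mem_edges he
        have hxnp : ¬ x ∈ p.support := hlast x hx hxw
        exact fun hc => hxnp (p.fst_mem_support_of_mem_edges hc)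
    calc T.dist v w ≤ q.length := T.dist_le q
      _ = q.edges.length := (q.length_edges).symm
      _ = q.edges.toFinset.card := (List.toFinset_card_of_nodup hq.edges_nodup).symm
      _ = {e | e ∈ q.edges}.ncard := by
          rw [show {e | e ∈ q.edges} = ↑q.edges.toFinset by ext f; simp, Set.ncard_coe_finset]
      _ ≤ S.ncard := Set.ncard_le_ncard hqS hfin
  rw [step1]
  obtain ⟨w, hw, hwle⟩ := step2b
  refine le_antisymm ?_ ?_
  · exact le_csInf ⟨T.dist v i, i, p.start_mem_support, rfl⟩ step2a
  · exact le_trans (Nat.sInf_le ⟨w, hw, rfl⟩) hwle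


end Stmt11Aux

/-- in a tree, `q_{i,j}` is the minimal distance from `v` to the unique
`i`–`j` path, and `q_{i,i} = dist(i,v)`. -/
theorem stmt_11 {V : Type*} [Fintype V] (T : SimpleGraph V) (hT : T.IsTree)
    (v i j : V) (hi : i ≠ v) (hj : j ≠ v) :
    (∀ p : T.Path i j,
      qEntry T v i j = sInf {d : ℕ | ∃ w ∈ (p : T.Walk i j).support, T.dist v w = d}) ∧
    qEntry T v i i = T.dist i v := by
  constructor
  · intro p
    exact qEntry_tree hT v i j p p.2
  · rw [qEntry_tree hT v i i Walk.nil Walk.IsPath.nil]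
    have hset : {d : ℕ | ∃ w ∈ (Walk.nil : T.Walk i i).support, T.dist v w = d}
        = {T.dist v i} := by
      ext d
      simp [Walk.support_nil, eq_comm]
    rw [hset, csInf_singleton, SimpleGraph.dist_comm]

end Braess
end

section
/- Let T be a finite tree of order n ≥ 2 with a vertex v. Then d_T^T Q_{T,v} d_T ≥ n − 1, with equality if and only if v is adjacent in T to every other vertex (i.e., for n = 2, T is the path P_2, and for n ≥ 3, T is the star S_n with centre v). -/
open SimpleGraph Filter

namespace Braess

universe u

variable {V : Type*}

section Stmt16Aux
set_option linter.unusedSectionVars false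
set_option linter.unusedVariables false

open Finset

variable {V : Type*} [Fintype V]

private lemma braess_deg_pos (T : SimpleGraph V) (hT : T.IsTree) (hV : 2 ≤ Fintype.card V)
    (i : V) : 1 ≤ deg T i := by
  obtain ⟨j, hj⟩ := Fintype.exists_ne_of_one_lt_card (by omega) i
  obtain ⟨p⟩ := hT.1.preconnected i j
  have hne : (T.neighborSet i).Nonempty := by
    cases p with
    | nil => exact absurd rfl hj
    | cons h q => exact ⟨_, h⟩
  haveI := hne.to_subtype
  haveI : Finite (T.neighborSet i) := Set.toFinite _
  exact Nat.card_pos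

private lemma braess_reach_of_two {H : SimpleGraph V}
    (h2 : Nat.card H.ConnectedComponent = 2)
    {i j v : V} (hi : ¬ H.Reachable i v) (hj : ¬ H.Reachable j v) : H.Reachable i j := by
  obtain ⟨a, b, hab, huniv⟩ := Nat.card_eq_two_iff.mp h2
  have hmem : ∀ c : H.ConnectedComponent, c = a ∨ c = b := by
    intro c
    have : c ∈ ({a, b} : Set _) := huniv ▸ Set.mem_univ c
    simpa using this
  rcases hmem (H.connectedComponentMk i) with h1 | h1 <;>
  rcases hmem (H.connectedComponentMk j) with h2' | h2' <;>
  rcases hmem (H.connectedComponentMk v) with h3 | h3 <;>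
  first
    | exact SimpleGraph.ConnectedComponent.exact (h1.trans h2'.symm)
    | exact absurd (SimpleGraph.ConnectedComponent.exact (h1.trans h3.symm)) hi
    | exact absurd (SimpleGraph.ConnectedComponent.exact (h2'.trans h3.symm)) hj

private lemma braess_exists_not_reach {H : SimpleGraph V}
    (h2 : Nat.card H.ConnectedComponent = 2) (v : V) : ∃ w, ¬ H.Reachable w v := by
  obtain ⟨a, b, hab, -⟩ := Nat.card_eq_two_iff.mp h2
  obtain ⟨c, hc⟩ : ∃ c : H.ConnectedComponent, c ≠ H.connectedComponentMk v := by
    by_cases h : a = H.connectedComponentMk v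
    · exact ⟨b, by rw [← h]; exact hab.symm⟩
    · exact ⟨a, h⟩
  obtain ⟨w, rfl⟩ := c.exists_rep
  exact ⟨w, fun h => hc (SimpleGraph.ConnectedComponent.sound h)⟩

private lemma braess_walk_reach_or (T : SimpleGraph V) (a b : V) {x y : V} (p : T.Walk x y) :
    (T.deleteEdges {s(a,b)}).Reachable x y ∨
      ((T.deleteEdges {s(a,b)}).Reachable x a ∧ (T.deleteEdges {s(a,b)}).Reachable y b) ∨
      ((T.deleteEdges {s(a,b)}).Reachable x b ∧ (T.deleteEdges {s(a,b)}).Reachable y a) := by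
  induction p with
  | nil => exact Or.inl (SimpleGraph.Reachable.refl _)
  | @cons x' y' z h q ih =>
    by_cases hxy : s(x', y') = s(a, b)
    · rw [Sym2.eq_iff] at hxy
      rcases hxy with ⟨rfl, rfl⟩ | ⟨rfl, rfl⟩
      · rcases ih with h' | ⟨h1, h2⟩ | ⟨h1, h2⟩
        · exact Or.inr (Or.inl ⟨SimpleGraph.Reachable.refl _, h'.symm⟩)
        · exact Or.inr (Or.inl ⟨SimpleGraph.Reachable.refl _, h2⟩)
        · exact Or.inl h2.symm
      · rcases ih with h' | ⟨h1, h2⟩ | ⟨h1, h2⟩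
        · exact Or.inr (Or.inr ⟨SimpleGraph.Reachable.refl _, h'.symm⟩)
        · exact Or.inl h2.symm
        · exact Or.inr (Or.inr ⟨SimpleGraph.Reachable.refl _, h2⟩)
    · have hadj : (T.deleteEdges {s(a,b)}).Adj x' y' := by
        rw [SimpleGraph.deleteEdges_adj]
        exact ⟨h, by simpa using hxy⟩
      rcases ih with h' | ⟨h1, h2⟩ | ⟨h1, h2⟩
      · exact Or.inl (hadj.reachable.trans h')
      · exact Or.inr (Or.inl ⟨hadj.reachable.trans h1, h2⟩)
      · exact Or.inr (Or.inr ⟨hadj.reachable.trans h1, h2⟩)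

private lemma braess_twoForest_deleteEdge (T : SimpleGraph V) (hT : T.IsTree) {e : Sym2 V}
    (he : e ∈ T.edgeSet) : IsTwoForest T (T.deleteEdges {e}) := by
  induction e with
  | _ a b =>
  rw [SimpleGraph.mem_edgeSet] at he
  have hbr := (SimpleGraph.isAcyclic_iff_forall_adj_isBridge.mp hT.2) he
  rw [SimpleGraph.isBridge_iff] at hbr
  have hnr : ¬ (T.deleteEdges {s(a,b)}).Reachable a b := hbr
  refine ⟨SimpleGraph.deleteEdges_le _, ?_, ?_⟩
  · intro x c hc
    exact hT.2 (c.mapLe (SimpleGraph.deleteEdges_le _)) (hc.mapLe _)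
  · rw [Nat.card_eq_two_iff]
    refine ⟨(T.deleteEdges {s(a,b)}).connectedComponentMk a,
      (T.deleteEdges {s(a,b)}).connectedComponentMk b, ?_, ?_⟩
    · intro h
      exact hnr (SimpleGraph.ConnectedComponent.exact h)
    · rw [Set.eq_univ_iff_forall]
      intro c
      obtain ⟨x, rfl⟩ := c.exists_rep
      obtain ⟨p⟩ := hT.1.preconnected x a
      rcases braess_walk_reach_or T a b p with h | ⟨h, -⟩ | ⟨h, -⟩
      · exact Set.mem_insert_iff.mpr (Or.inl (SimpleGraph.ConnectedComponent.sound h))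
      · exact Set.mem_insert_iff.mpr (Or.inl (SimpleGraph.ConnectedComponent.sound h))
      · exact Set.mem_insert_iff.mpr (Or.inr (SimpleGraph.ConnectedComponent.sound h))

private lemma braess_deleteEdges_injOn (T : SimpleGraph V) {e₁ e₂ : Sym2 V}
    (h₁ : e₁ ∈ T.edgeSet) (h₂ : e₂ ∈ T.edgeSet)
    (h : T.deleteEdges {e₁} = T.deleteEdges {e₂}) : e₁ = e₂ := by
  by_contra hne
  have hx : e₂ ∈ (T.deleteEdges {e₁}).edgeSet := by
    rw [SimpleGraph.edgeSet_deleteEdges]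
    exact ⟨h₂, by simpa using Ne.symm hne⟩
  rw [h, SimpleGraph.edgeSet_deleteEdges] at hx
  exact hx.2 rfl


open scoped Classical in
private noncomputable def braessS (T H : SimpleGraph V) (v : V) : ℚ :=
  ∑ i : V, if ¬ H.Reachable i v then (deg T i : ℚ) else 0

open scoped Classical in
private lemma braess_dQd_eq_sum (T : SimpleGraph V) (v : V)
    (F : Finset (SimpleGraph V)) (hF : ∀ H, H ∈ F ↔ IsTwoForest T H) :
    dQd T v = ∑ H ∈ F, braessS T H v * braessS T H v := by
  have hq : ∀ i j : V, (qEntry T v i j : ℚ)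
      = ∑ H ∈ F, (if (H.Reachable i j ∧ ¬ H.Reachable i v) then (1:ℚ) else 0) := by
    intro i j
    have e : {H : SimpleGraph V // IsTwoForest T H ∧ (H.Reachable i j ∧ ¬ H.Reachable i v)}
        ≃ {H : SimpleGraph V //
            H ∈ F.filter (fun H => H.Reachable i j ∧ ¬ H.Reachable i v)} :=
      Equiv.subtypeEquivRight (fun H => by simp [Finset.mem_filter, hF])
    have hcard : qEntry T v i j
        = (F.filter (fun H => H.Reachable i j ∧ ¬ H.Reachable i v)).card := by
      rw [qEntry, Nat.card_congr e, Nat.card_eq_finsetCard]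
    rw [hcard, Finset.sum_boole]
  calc dQd T v
      = ∑ i : V, ∑ j : V, (deg T i : ℚ) * (qEntry T v i j : ℚ) * (deg T j : ℚ) := by
        simp only [dQd, finsum_eq_sum_of_fintype]
    _ = ∑ i : V, ∑ j : V, ∑ H ∈ F, (deg T i : ℚ) *
          (if (H.Reachable i j ∧ ¬ H.Reachable i v) then (1:ℚ) else 0) * (deg T j : ℚ) := by
        refine Finset.sum_congr rfl fun i _ => Finset.sum_congr rfl fun j _ => ?_
        rw [hq i j, Finset.mul_sum, Finset.sum_mul]
    _ = ∑ i : V, ∑ H ∈ F, ∑ j : V, (deg T i : ℚ) *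
          (if (H.Reachable i j ∧ ¬ H.Reachable i v) then (1:ℚ) else 0) * (deg T j : ℚ) :=
        Finset.sum_congr rfl fun i _ => Finset.sum_comm
    _ = ∑ H ∈ F, ∑ i : V, ∑ j : V, (deg T i : ℚ) *
          (if (H.Reachable i j ∧ ¬ H.Reachable i v) then (1:ℚ) else 0) * (deg T j : ℚ) :=
        Finset.sum_comm
    _ = ∑ H ∈ F, braessS T H v * braessS T H v := by
        refine Finset.sum_congr rfl fun H hH => ?_
        have h2 := ((hF H).mp hH).2.2
        have key : ∀ i j : V, (deg T i : ℚ) *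
            (if (H.Reachable i j ∧ ¬ H.Reachable i v) then (1:ℚ) else 0) * (deg T j : ℚ)
            = (if ¬ H.Reachable i v then (deg T i : ℚ) else 0) *
              (if ¬ H.Reachable j v then (deg T j : ℚ) else 0) := by
          intro i j
          by_cases hi : H.Reachable i v
          · simp [hi]
          · by_cases hj : H.Reachable j v
            · have hij : ¬ H.Reachable i j := fun h => hi (h.trans hj)
              simp [hi, hj, hij]
            · have hij : H.Reachable i j := braess_reach_of_two h2 hi hj
              simp [hi, hj, hij]
        simp_rw [key]
        rw [← Finset.sum_mul_sum]
        simp only [braessS]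

open scoped Classical in
private lemma braess_S_ge_one (T : SimpleGraph V) (hT : T.IsTree) (hV : 2 ≤ Fintype.card V)
    (v : V) {H : SimpleGraph V} (hH : IsTwoForest T H) : 1 ≤ braessS T H v := by
  obtain ⟨w, hw⟩ := braess_exists_not_reach hH.2.2 v
  simp only [braessS]
  calc (1:ℚ) ≤ (deg T w : ℚ) := by exact_mod_cast braess_deg_pos T hT hV w
    _ = (if ¬ H.Reachable w v then (deg T w : ℚ) else 0) := (if_pos hw).symm
    _ ≤ ∑ i : V, (if ¬ H.Reachable i v then (deg T i : ℚ) else 0) :=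
        Finset.single_le_sum (f := fun i => if ¬ H.Reachable i v then (deg T i : ℚ) else 0)
          (fun i _ => by by_cases h : H.Reachable i v <;> simp [h])
          (Finset.mem_univ w)

private lemma braess_star_no_edge (T : SimpleGraph V) (hT : T.IsTree) {v : V}
    (hstar : ∀ w, w ≠ v → T.Adj v w) {w w' : V} (hw : w ≠ v) (hw' : w' ≠ v) :
    ¬ T.Adj w w' := by
  intro h
  have hbr := (SimpleGraph.isAcyclic_iff_forall_adj_isBridge.mp hT.2) h
  rw [SimpleGraph.isBridge_iff] at hbr
  apply hbr
  have hww' : w ≠ w' := h.ne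
  have h1 : (T.deleteEdges {s(w,w')}).Adj w v := by
    rw [SimpleGraph.deleteEdges_adj]
    refine ⟨(hstar w hw).symm, ?_⟩
    intro hm
    rcases Sym2.eq_iff.mp (Set.mem_singleton_iff.mp hm) with ⟨-, h'⟩ | ⟨h', -⟩
    · exact hw' h'.symm
    · exact hww' h'
  have h2 : (T.deleteEdges {s(w,w')}).Adj v w' := by
    rw [SimpleGraph.deleteEdges_adj]
    refine ⟨hstar w' hw', ?_⟩
    intro hm
    rcases Sym2.eq_iff.mp (Set.mem_singleton_iff.mp hm) with ⟨h', -⟩ | ⟨h', -⟩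
    · exact hw h'.symm
    · exact hw' h'.symm
  exact h1.reachable.trans h2.reachable

private lemma braess_star_structure (T : SimpleGraph V) (hT : T.IsTree) {v : V}
    (hstar : ∀ w, w ≠ v → T.Adj v w) {H : SimpleGraph V} (hH : IsTwoForest T H) :
    ∃ w, w ≠ v ∧ (∀ i, ¬ H.Reachable i v ↔ i = w) ∧ H = T.deleteEdges {s(v,w)} ∧
      T.neighborSet w = {v} := by
  obtain ⟨w, hw⟩ := braess_exists_not_reach hH.2.2 v
  have hwv : w ≠ v := by intro h; apply hw; rw [h]
  have hno : ∀ x, ¬ H.Adj w x := by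
    intro x hx
    by_cases hxv : x = v
    · exact hw (hxv ▸ hx.reachable)
    · exact braess_star_no_edge T hT hstar hwv hxv (hH.1 hx)
  have hC : ∀ i, ¬ H.Reachable i v ↔ i = w := by
    intro i
    constructor
    · intro hi
      obtain ⟨q⟩ := (braess_reach_of_two hH.2.2 hi hw).symm
      cases q with
      | nil => rfl
      | cons h _ => exact absurd h (hno _)
    · rintro rfl; exact hw
  have hvb : ∀ b, b ≠ v → b ≠ w → H.Adj v b := by
    intro b hbv hbw
    have hrb : H.Reachable b v := by
      by_contra h; exact hbw ((hC b).mp h)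
    obtain ⟨p⟩ := hrb
    cases p with
    | nil => exact absurd rfl hbv
    | @cons _ x _ h q =>
      by_cases hxv : x = v
      · subst hxv; exact h.symm
      · exact absurd (hH.1 h) (braess_star_no_edge T hT hstar hbv hxv)
  have hHeq : H = T.deleteEdges {s(v,w)} := by
    ext a b
    rw [SimpleGraph.deleteEdges_adj]
    constructor
    · intro ha
      refine ⟨hH.1 ha, ?_⟩
      intro hm
      rcases Sym2.eq_iff.mp (Set.mem_singleton_iff.mp hm) with ⟨rfl, rfl⟩ | ⟨rfl, rfl⟩
      · exact hno _ ha.symm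
      · exact hno _ ha
    · rintro ⟨ha, hm⟩
      have hne : s(a,b) ≠ s(v,w) := fun h => hm (Set.mem_singleton_iff.mpr h)
      by_cases hav : a = v
      · have hbv : b ≠ v := by rw [← hav]; exact ha.ne'
        have hbw : b ≠ w := fun h => hne (by rw [hav, h])
        rw [hav]; exact hvb b hbv hbw
      · by_cases hbv : b = v
        · have haw : a ≠ w := fun h => hne (by rw [hbv, h]; exact Sym2.eq_swap)
          rw [hbv]; exact (hvb a hav haw).symm
        · exact absurd ha (braess_star_no_edge T hT hstar hav hbv)
  have hnbr : T.neighborSet w = {v} := by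
    ext x
    simp only [SimpleGraph.mem_neighborSet, Set.mem_singleton_iff]
    constructor
    · intro hx
      by_contra hxv
      exact braess_star_no_edge T hT hstar hwv hxv hx
    · rintro rfl
      exact (hstar w hwv).symm
  exact ⟨w, hwv, hC, hHeq, hnbr⟩

end Stmt16Aux

/-- `d_T^T Q_{T,v} d_T ≥ n − 1` with equality iff `v` is adjacent to every
other vertex. -/
theorem stmt_16 {V : Type*} [Fintype V] (T : SimpleGraph V) (hT : T.IsTree)
    (hV : 2 ≤ Fintype.card V) (v : V) :
    ((Fintype.card V : ℚ) - 1 ≤ dQd T v) ∧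
    (dQd T v = (Fintype.card V : ℚ) - 1 ↔ ∀ w, w ≠ v → T.Adj v w) := by
  classical
  haveI : Finite (SimpleGraph V) :=
    Finite.of_injective (fun G => G.Adj) fun G G' h => SimpleGraph.ext h
  have hFfin : ({H : SimpleGraph V | IsTwoForest T H}).Finite := Set.toFinite _
  set F : Finset (SimpleGraph V) := hFfin.toFinset with hFdef
  have hF : ∀ H, H ∈ F ↔ IsTwoForest T H := fun H => by
    rw [hFdef, Set.Finite.mem_toFinset]; rfl
  have hsum : dQd T v = ∑ H ∈ F, braessS T H v * braessS T H v := braess_dQd_eq_sum T v F hF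
  have hS1 : ∀ H ∈ F, 1 ≤ braessS T H v := fun H hH =>
    braess_S_ge_one T hT hV v ((hF H).mp hH)
  have hedge : T.edgeFinset.card + 1 = Fintype.card V := hT.card_edgeFinset
  have hinj : T.edgeFinset.card ≤ F.card := by
    apply Finset.card_le_card_of_injOn (fun e => T.deleteEdges {e})
    · intro e he
      rw [Finset.mem_coe, hF]
      exact braess_twoForest_deleteEdge T hT (SimpleGraph.mem_edgeFinset.mp he)
    · intro e₁ h₁ e₂ h₂ h
      exact braess_deleteEdges_injOn T
        (SimpleGraph.mem_edgeFinset.mp (Finset.mem_coe.mp h₁))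
        (SimpleGraph.mem_edgeFinset.mp (Finset.mem_coe.mp h₂)) h
  have hedgeQ : (T.edgeFinset.card : ℚ) = (Fintype.card V : ℚ) - 1 := by
    rw [← hedge]; push_cast; ring
  have hcardF : (Fintype.card V : ℚ) - 1 ≤ (F.card : ℚ) := by
    rw [← hedgeQ]; exact_mod_cast hinj
  have hsq : ∀ H ∈ F, (1:ℚ) ≤ braessS T H v * braessS T H v := fun H hH => by
    nlinarith [hS1 H hH]
  have hlow : (Fintype.card V : ℚ) - 1 ≤ dQd T v := by
    rw [hsum]
    calc (Fintype.card V : ℚ) - 1 ≤ (F.card : ℚ) := hcardF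
      _ = ∑ _H ∈ F, (1:ℚ) := by rw [Finset.sum_const, nsmul_eq_mul, mul_one]
      _ ≤ ∑ H ∈ F, braessS T H v * braessS T H v := Finset.sum_le_sum hsq
  refine ⟨hlow, ?_, ?_⟩
  · -- equality → star
    intro heq
    by_contra hnstar
    push_neg at hnstar
    obtain ⟨w, hwv, hnadj⟩ := hnstar
    obtain ⟨p0⟩ := hT.1.preconnected v w
    obtain ⟨p, hpath⟩ := p0.toPath
    cases p with
    | nil => exact hwv rfl
    | @cons _ u _ h r =>
      rw [SimpleGraph.Walk.cons_isPath_iff] at hpath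
      have hH0F : T.deleteEdges {s(v,u)} ∈ F :=
        (hF _).mpr (braess_twoForest_deleteEdge T hT (T.mem_edgeSet.mpr h))
      have hbr := (SimpleGraph.isAcyclic_iff_forall_adj_isBridge.mp hT.2) h
      rw [SimpleGraph.isBridge_iff] at hbr
      have hnuv : ¬ (T.deleteEdges {s(v,u)}).Reachable u v := fun hr => hbr hr.symm
      have hnwv : ¬ (T.deleteEdges {s(v,u)}).Reachable w v := by
        intro hr
        have hre : ∀ e ∈ r.edges, e ∉ ({s(v,u)} : Set (Sym2 V)) := by
          intro e hee hme
          rw [Set.mem_singleton_iff] at hme; subst hme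
          exact hpath.2 (r.fst_mem_support_of_mem_edges hee)
        have hru : (T.deleteEdges {s(v,u)}).Reachable u w :=
          (r.toDeleteEdges _ hre).reachable
        exact hnuv (hru.trans hr)
      have huw : u ≠ w := fun h' => hnadj (h' ▸ h)
      have hS2 : 2 ≤ braessS T (T.deleteEdges {s(v,u)}) v := by
        simp only [braessS]
        have hsum2 : ∑ i ∈ ({u, w} : Finset V),
            (if ¬ (T.deleteEdges {s(v,u)}).Reachable i v then (deg T i : ℚ) else 0)
            = (deg T u : ℚ) + (deg T w : ℚ) := by
          rw [Finset.sum_pair huw, if_pos hnuv, if_pos hnwv]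
        calc (2:ℚ) = 1 + 1 := by norm_num
          _ ≤ (deg T u : ℚ) + (deg T w : ℚ) := by
              have h1 := braess_deg_pos T hT hV u
              have h2 := braess_deg_pos T hT hV w
              have h1' : (1:ℚ) ≤ (deg T u : ℚ) := by exact_mod_cast h1
              have h2' : (1:ℚ) ≤ (deg T w : ℚ) := by exact_mod_cast h2
              linarith
          _ = ∑ i ∈ ({u, w} : Finset V),
              (if ¬ (T.deleteEdges {s(v,u)}).Reachable i v then (deg T i : ℚ) else 0) :=
              hsum2.symm
          _ ≤ ∑ i : V,
              (if ¬ (T.deleteEdges {s(v,u)}).Reachable i v then (deg T i : ℚ) else 0) :=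
              Finset.sum_le_sum_of_subset_of_nonneg (Finset.subset_univ _)
                (fun i _ _ => by
                  by_cases hi : (T.deleteEdges {s(v,u)}).Reachable i v <;> simp [hi])
        exact le_of_eq (Finset.sum_congr rfl fun i _ => by congr)
      have hsplit : ∑ H ∈ F, braessS T H v * braessS T H v
          = braessS T (T.deleteEdges {s(v,u)}) v * braessS T (T.deleteEdges {s(v,u)}) v
            + ∑ H ∈ F.erase (T.deleteEdges {s(v,u)}), braessS T H v * braessS T H v :=
        (Finset.add_sum_erase F _ hH0F).symm
      have h1 : ((F.erase (T.deleteEdges {s(v,u)})).card : ℚ)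
          ≤ ∑ H ∈ F.erase (T.deleteEdges {s(v,u)}), braessS T H v * braessS T H v := by
        calc ((F.erase (T.deleteEdges {s(v,u)})).card : ℚ)
            = ∑ _H ∈ F.erase (T.deleteEdges {s(v,u)}), (1:ℚ) := by
              rw [Finset.sum_const, nsmul_eq_mul, mul_one]
          _ ≤ _ := Finset.sum_le_sum fun H hH => hsq H (Finset.mem_of_mem_erase hH)
      have hec : (F.erase (T.deleteEdges {s(v,u)})).card = F.card - 1 :=
        Finset.card_erase_of_mem hH0F
      have hcpos : 1 ≤ F.card := Finset.card_pos.mpr ⟨_, hH0F⟩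
      have hecQ : ((F.erase (T.deleteEdges {s(v,u)})).card : ℚ) = (F.card : ℚ) - 1 := by
        rw [hec, Nat.cast_sub hcpos, Nat.cast_one]
      rw [hsum, hsplit] at heq
      nlinarith [hS2, h1, hcardF, hecQ]
  · -- star → equality
    intro hstar
    have hFim : F = T.edgeFinset.image (fun e => T.deleteEdges {e}) := by
      ext H
      rw [hF, Finset.mem_image]
      constructor
      · intro hH
        obtain ⟨w, hwv, -, hHeq, -⟩ := braess_star_structure T hT hstar hH
        exact ⟨s(v,w), SimpleGraph.mem_edgeFinset.mpr (hstar w hwv), hHeq.symm⟩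
      · rintro ⟨e, he, rfl⟩
        exact braess_twoForest_deleteEdge T hT (SimpleGraph.mem_edgeFinset.mp he)
    have hFcard : F.card = T.edgeFinset.card := by
      rw [hFim]
      apply Finset.card_image_of_injOn
      intro e₁ h₁ e₂ h₂ h
      exact braess_deleteEdges_injOn T
        (SimpleGraph.mem_edgeFinset.mp (Finset.mem_coe.mp h₁))
        (SimpleGraph.mem_edgeFinset.mp (Finset.mem_coe.mp h₂)) h
    have hSone : ∀ H ∈ F, braessS T H v = 1 := by
      intro H hH
      obtain ⟨w, hwv, hC, -, hnbr⟩ := braess_star_structure T hT hstar ((hF H).mp hH)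
      have hdegw : deg T w = 1 := by
        rw [deg, hnbr, Nat.card_coe_set_eq, Set.ncard_singleton]
      simp only [braessS]
      rw [Finset.sum_eq_single w]
      · rw [if_pos ((hC w).mpr rfl), hdegw]; norm_num
      · intro i _ hi
        rw [if_neg]
        intro hri
        exact hi ((hC i).mp hri)
      · intro hw; exact absurd (Finset.mem_univ w) hw
    rw [hsum]
    calc ∑ H ∈ F, braessS T H v * braessS T H v = ∑ H ∈ F, (1:ℚ) :=
        Finset.sum_congr rfl fun H hH => by rw [hSone H hH]; ring
      _ = (F.card : ℚ) := by rw [Finset.sum_const, nsmul_eq_mul, mul_one]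
      _ = (Fintype.card V : ℚ) - 1 := by rw [hFcard, hedgeQ]


end Braess
end
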